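/- (PGB necessary condition of local minima, inequality form.) Let Q(z) = (1/m)·∑_{i=1}^m [Q_i(φ_i(z)) + R_i(ψ_i(z))], where each Q_i : ℝ^{d_φ} → ℝ and R_i : ℝ^{d_ψ} → ℝ is differentiable, convex, and nonnegative, and each φ_i : ℝ^{d_z} → ℝ^{d_φ} and ψ_i : ℝ^{d_z} → ℝ^{d_ψ} is differentiable. Assume there exist h : ℝ^{d_z} → ℝ^{d_z} and a real number ρ ≠ 0 such that for all i and all z ∈ ℝ^{d_z}: φ_i(z) = ∑_{k=1}^{d_z} h(z)_k·∂_k φ_i(z) and ψ_i(z) = ρ·∑_{k=1}^{d_z} h(z)_k·∂_k ψ_i(z). Then for every local minimum z of Q there exists ε₀ > 0 such that for every ε ∈ [0, ε₀), every finite list S = (v_1,…,v_s) of vectors in V[z,ε], and every matrix α ∈ ℝ^{d_z × s}: Q(z) ≤ (1/m)·∑_{i=1}^m [Q_i(φ_i^z(α,ε,S)) + R_i(ψ_i^z(α,ε,S))] + ((ρ−1)/(ρ·m))·∑_{i=1}^m ⟨∇R_i(ψ_i(z)), ψ_i(z)⟩. -/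

import Mathlib

open scoped RealInnerProductSpace

noncomputable section


/-- Tangent line bound for a convex differentiable function. -/
lemma convexOn_tangent_le {E : Type*} [NormedAddCommGroup E] [NormedSpace ℝ E]
    (f : E → ℝ) (hd : Differentiable ℝ f) (hc : ConvexOn ℝ Set.univ f) (x y : E) :
    f x + fderiv ℝ f x (y - x) ≤ f y := by
  set g : ℝ → ℝ := fun t => f (x + t • (y - x)) with hg
  have hgc : ConvexOn ℝ Set.univ g := by
    refine ⟨convex_univ, ?_⟩
    intro p _ q _ a b ha hb hab
    have e : x + (a * p + b * q) • (y - x)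
        = a • (x + p • (y - x)) + b • (x + q • (y - x)) := by
      calc x + (a * p + b * q) • (y - x)
          = (a + b) • x + (a * p + b * q) • (y - x) := by rw [hab, one_smul]
        _ = a • (x + p • (y - x)) + b • (x + q • (y - x)) := by module
    have := hc.2 (Set.mem_univ (x + p • (y - x))) (Set.mem_univ (x + q • (y - x))) ha hb hab
    simpa [g, smul_eq_mul, e] using this
  have hinner : HasDerivAt (fun t : ℝ => x + t • (y - x)) (y - x) 0 := by
    simpa using ((hasDerivAt_id (0 : ℝ)).smul_const (y - x)).const_add x
  have hgd : HasDerivAt g (fderiv ℝ f x (y - x)) 0 := by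
    have h0 : x + (0 : ℝ) • (y - x) = x := by simp
    have := (hd (x + (0:ℝ) • (y - x))).hasFDerivAt.comp_hasDerivAt 0 hinner
    rw [h0] at this
    exact this
  have hs := hgc.le_slope_of_hasDerivAt (Set.mem_univ (0:ℝ)) (Set.mem_univ (1:ℝ))
    zero_lt_one hgd
  have : slope g 0 1 = f y - f x := by
    simp [slope_def_field, g]
  linarith [hs.trans_eq this]

/-- **PGB necessary condition of local minima, inequality form.**
For `Q(z) = (1/m) ∑ᵢ [Qᵢ(φᵢ(z)) + Rᵢ(ψᵢ(z))]` with `Qᵢ, Rᵢ` differentiable, convex and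
nonnegative, `φᵢ, ψᵢ` differentiable, and assuming
`φᵢ(z) = ∑ₖ h(z)ₖ ∂ₖφᵢ(z)` and `ψᵢ(z) = ρ ∑ₖ h(z)ₖ ∂ₖψᵢ(z)` for some `h` and `ρ ≠ 0`,
every local minimum `z` of `Q` satisfies: there is `ε₀ > 0` such that for all
`ε ∈ [0, ε₀)`, every finite list `S` of vectors in `V[z,ε]` and every `α`,
`Q(z) ≤ (1/m) ∑ᵢ [Qᵢ(φᵢᶻ(α,ε,S)) + Rᵢ(ψᵢᶻ(α,ε,S))]
        + ((ρ−1)/(ρ m)) ∑ᵢ ⟨∇Rᵢ(ψᵢ(z)), ψᵢ(z)⟩`. -/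
theorem pgb_necessary_condition
    (m dz dphi dpsi : ℕ) (hm : 0 < m)
    (Qi : Fin m → EuclideanSpace ℝ (Fin dphi) → ℝ)
    (Ri : Fin m → EuclideanSpace ℝ (Fin dpsi) → ℝ)
    (φ : Fin m → EuclideanSpace ℝ (Fin dz) → EuclideanSpace ℝ (Fin dphi))
    (ψ : Fin m → EuclideanSpace ℝ (Fin dz) → EuclideanSpace ℝ (Fin dpsi))
    (hQd : ∀ i, Differentiable ℝ (Qi i))
    (hQc : ∀ i, ConvexOn ℝ Set.univ (Qi i))
    (hQ0 : ∀ i q, 0 ≤ Qi i q)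
    (hRd : ∀ i, Differentiable ℝ (Ri i))
    (hRc : ∀ i, ConvexOn ℝ Set.univ (Ri i))
    (hR0 : ∀ i q, 0 ≤ Ri i q)
    (hφd : ∀ i, Differentiable ℝ (φ i))
    (hψd : ∀ i, Differentiable ℝ (ψ i))
    (h : EuclideanSpace ℝ (Fin dz) → EuclideanSpace ℝ (Fin dz)) (ρ : ℝ) (hρ : ρ ≠ 0)
    (hhφ : ∀ i z, φ i z = ∑ k, h z k • fderiv ℝ (φ i) z (EuclideanSpace.single k 1))
    (hhψ : ∀ i z, ψ i z = ρ • ∑ k, h z k • fderiv ℝ (ψ i) z (EuclideanSpace.single k 1))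
    (Q : EuclideanSpace ℝ (Fin dz) → ℝ)
    (hQ : ∀ z, Q z = (1 / (m : ℝ)) * ∑ i, (Qi i (φ i z) + Ri i (ψ i z)))
    (z : EuclideanSpace ℝ (Fin dz)) (hz : IsLocalMin Q z) :
    ∃ ε₀ > (0 : ℝ), ∀ ε : ℝ, 0 ≤ ε → ε < ε₀ →
      ∀ (s : ℕ) (S : Fin s → EuclideanSpace ℝ (Fin dz)),
        (∀ j, ‖S j‖ ≤ 1 ∧ ∀ i, φ i (z + ε • S j) = φ i z ∧ ψ i (z + ε • S j) = ψ i z) →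
        ∀ α : Fin dz → Fin s → ℝ,
          Q z ≤ (1 / (m : ℝ)) * ∑ i,
              (Qi i (∑ k, ∑ j, α k j •
                  fderiv ℝ (φ i) (z + ε • S j) (EuclideanSpace.single k 1)) +
               Ri i (∑ k, ∑ j, α k j •
                  fderiv ℝ (ψ i) (z + ε • S j) (EuclideanSpace.single k 1)))
            + ((ρ - 1) / (ρ * m)) * ∑ i, ⟪gradient (Ri i) (ψ i z), ψ i z⟫ := by
  have hm0 : (0:ℝ) < (m:ℝ) := by exact_mod_cast hm
  have hminv : (0:ℝ) < 1 / (m:ℝ) := by positivity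
  -- At any local minimum w of Q, the derivative of the sum vanishes.
  have key : ∀ w : EuclideanSpace ℝ (Fin dz), IsLocalMin Q w →
      ∀ u : EuclideanSpace ℝ (Fin dz),
      ∑ i, (fderiv ℝ (Qi i) (φ i w) (fderiv ℝ (φ i) w u)
          + fderiv ℝ (Ri i) (ψ i w) (fderiv ℝ (ψ i) w u)) = 0 := by
    intro w hw u
    set L : EuclideanSpace ℝ (Fin dz) →L[ℝ] ℝ :=
      ∑ i, ((fderiv ℝ (Qi i) (φ i w)).comp (fderiv ℝ (φ i) w)
          + (fderiv ℝ (Ri i) (ψ i w)).comp (fderiv ℝ (ψ i) w)) with hLdef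
    have hL : HasFDerivAt (fun x => ∑ i, (Qi i (φ i x) + Ri i (ψ i x))) L w := by
      rw [hLdef]
      exact HasFDerivAt.fun_sum fun i _ =>
        ((hQd i (φ i w)).hasFDerivAt.comp w (hφd i w).hasFDerivAt).add
          ((hRd i (ψ i w)).hasFDerivAt.comp w (hψd i w).hasFDerivAt)
    have hQL : HasFDerivAt Q ((1 / (m:ℝ)) • L) w := by
      have hQfun : Q = fun x => (1 / (m:ℝ)) * ∑ i, (Qi i (φ i x) + Ri i (ψ i x)) := funext hQ
      rw [hQfun]
      exact hL.const_mul _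
    have h0 := hw.hasFDerivAt_eq_zero hQL
    have hL0 : L = 0 := by
      rcases smul_eq_zero.mp h0 with hc | hc
      · exact absurd hc (one_div_ne_zero (ne_of_gt hm0))
      · exact hc
    have := congrArg (fun T : EuclideanSpace ℝ (Fin dz) →L[ℝ] ℝ => T u) hL0
    simpa [hLdef, ContinuousLinearMap.sum_apply] using this
  rcases Metric.eventually_nhds_iff_ball.mp hz with ⟨r, hr, hball⟩
  refine ⟨r / 2, by positivity, ?_⟩
  intro ε hε0 hε s S hS α
  -- each perturbed point is also a local minimum
  have hwmin : ∀ j : Fin s, IsLocalMin Q (z + ε • S j) := by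
    intro j
    have hQw : Q (z + ε • S j) = Q z := by
      rw [hQ, hQ]
      congr 1
      refine Finset.sum_congr rfl fun i _ => ?_
      rw [((hS j).2 i).1, ((hS j).2 i).2]
    have hdist : dist (z + ε • S j) z ≤ ε := by
      rw [dist_eq_norm, add_sub_cancel_left, norm_smul, Real.norm_eq_abs, abs_of_nonneg hε0]
      calc ε * ‖S j‖ ≤ ε * 1 := by
            exact mul_le_mul_of_nonneg_left (hS j).1 hε0
        _ = ε := mul_one ε
    have : ∀ᶠ x in nhds (z + ε • S j), Q (z + ε • S j) ≤ Q x := by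
      refine Metric.eventually_nhds_iff_ball.mpr ⟨r / 2, by positivity, fun y hy => ?_⟩
      have hy2 : dist y z < r := by
        have h1 := dist_triangle y (z + ε • S j) z
        have h2 : dist y (z + ε • S j) < r / 2 := Metric.mem_ball.mp hy
        linarith
      rw [hQw]
      exact hball y (Metric.mem_ball.mpr hy2)
    exact this
  have keyz : ∀ j : Fin s, ∀ u : EuclideanSpace ℝ (Fin dz),
      ∑ i, (fderiv ℝ (Qi i) (φ i z) (fderiv ℝ (φ i) (z + ε • S j) u)
          + fderiv ℝ (Ri i) (ψ i z) (fderiv ℝ (ψ i) (z + ε • S j) u)) = 0 := by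
    intro j u
    refine Eq.trans (Finset.sum_congr rfl fun i _ => ?_) (key (z + ε • S j) (hwmin j) u)
    rw [((hS j).2 i).1, ((hS j).2 i).2]
  set A : Fin m → EuclideanSpace ℝ (Fin dphi) := fun i =>
    ∑ k, ∑ j, α k j • fderiv ℝ (φ i) (z + ε • S j) (EuclideanSpace.single k 1) with hA
  set B : Fin m → EuclideanSpace ℝ (Fin dpsi) := fun i =>
    ∑ k, ∑ j, α k j • fderiv ℝ (ψ i) (z + ε • S j) (EuclideanSpace.single k 1) with hB
  set DQ : Fin m → EuclideanSpace ℝ (Fin dphi) →L[ℝ] ℝ :=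
    fun i => fderiv ℝ (Qi i) (φ i z) with hDQ
  set DR : Fin m → EuclideanSpace ℝ (Fin dpsi) →L[ℝ] ℝ :=
    fun i => fderiv ℝ (Ri i) (ψ i z) with hDR
  set G : ℝ := ∑ i, DR i (ψ i z) with hG
  have F1 : ∑ i, (DQ i (A i) + DR i (B i)) = 0 := by
    have expand : ∀ i, DQ i (A i) + DR i (B i)
        = ∑ k, ∑ j, α k j * (DQ i (fderiv ℝ (φ i) (z + ε • S j) (EuclideanSpace.single k 1))
            + DR i (fderiv ℝ (ψ i) (z + ε • S j) (EuclideanSpace.single k 1))) := by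
      intro i
      simp only [hA, hB, map_sum, map_smul, smul_eq_mul, mul_add, Finset.sum_add_distrib]
    rw [Finset.sum_congr rfl fun i _ => expand i, Finset.sum_comm]
    refine Finset.sum_eq_zero fun k _ => ?_
    rw [Finset.sum_comm]
    refine Finset.sum_eq_zero fun j _ => ?_
    rw [← Finset.mul_sum, keyz j (EuclideanSpace.single k 1), mul_zero]
  have F2 : ∑ i, (DQ i (φ i z) + (1/ρ) * DR i (ψ i z)) = 0 := by
    have expand : ∀ i, DQ i (φ i z) + (1/ρ) * DR i (ψ i z)
        = ∑ k, h z k * (DQ i (fderiv ℝ (φ i) z (EuclideanSpace.single k 1))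
            + DR i (fderiv ℝ (ψ i) z (EuclideanSpace.single k 1))) := by
      intro i
      have e1 : DQ i (φ i z)
          = ∑ k, h z k * DQ i (fderiv ℝ (φ i) z (EuclideanSpace.single k 1)) := by
        conv_lhs => rw [hhφ i z]
        simp only [map_sum, map_smul, smul_eq_mul]
      have e2 : (1/ρ) * DR i (ψ i z)
          = ∑ k, h z k * DR i (fderiv ℝ (ψ i) z (EuclideanSpace.single k 1)) := by
        conv_lhs => rw [hhψ i z]
        rw [map_smul, smul_eq_mul, ← mul_assoc, one_div, inv_mul_cancel₀ hρ, one_mul]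
        simp only [map_sum, map_smul, smul_eq_mul]
      rw [e1, e2, ← Finset.sum_add_distrib]
      exact Finset.sum_congr rfl fun k _ => by ring
    rw [Finset.sum_congr rfl fun i _ => expand i, Finset.sum_comm]
    refine Finset.sum_eq_zero fun k _ => ?_
    rw [← Finset.mul_sum, key z hz (EuclideanSpace.single k 1), mul_zero]
  have hDQsum : ∑ i, DQ i (φ i z) = -(1/ρ) * G := by
    rw [Finset.sum_add_distrib, ← Finset.mul_sum, ← hG] at F2
    linarith
  have F3 : ∑ i, (Qi i (φ i z) + Ri i (ψ i z))
      ≤ (∑ i, (Qi i (A i) + Ri i (B i))) + (1 - 1/ρ) * G := by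
    have conv1 : ∀ i, Qi i (φ i z) ≤ Qi i (A i) - DQ i (A i) + DQ i (φ i z) := by
      intro i
      have ht := convexOn_tangent_le (Qi i) (hQd i) (hQc i) (φ i z) (A i)
      rw [map_sub] at ht
      change Qi i (φ i z) + (DQ i (A i) - DQ i (φ i z)) ≤ Qi i (A i) at ht
      linarith
    have conv2 : ∀ i, Ri i (ψ i z) ≤ Ri i (B i) - DR i (B i) + DR i (ψ i z) := by
      intro i
      have ht := convexOn_tangent_le (Ri i) (hRd i) (hRc i) (ψ i z) (B i)
      rw [map_sub] at ht
      change Ri i (ψ i z) + (DR i (B i) - DR i (ψ i z)) ≤ Ri i (B i) at ht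
      linarith
    calc ∑ i, (Qi i (φ i z) + Ri i (ψ i z))
        ≤ ∑ i, ((Qi i (A i) - DQ i (A i) + DQ i (φ i z))
            + (Ri i (B i) - DR i (B i) + DR i (ψ i z))) :=
          Finset.sum_le_sum fun i _ => add_le_add (conv1 i) (conv2 i)
      _ = (∑ i, (Qi i (A i) + Ri i (B i))) - (∑ i, (DQ i (A i) + DR i (B i)))
            + ((∑ i, DQ i (φ i z)) + G) := by
          rw [hG, ← Finset.sum_sub_distrib, ← Finset.sum_add_distrib, ← Finset.sum_add_distrib]
          exact Finset.sum_congr rfl fun i _ => by ring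
      _ = (∑ i, (Qi i (A i) + Ri i (B i))) + (1 - 1/ρ) * G := by
          rw [F1, hDQsum]; ring
  have hgrad : ∑ i, ⟪gradient (Ri i) (ψ i z), ψ i z⟫ = G := by
    rw [hG]
    refine Finset.sum_congr rfl fun i _ => ?_
    rw [gradient, hDR]
    exact InnerProductSpace.toDual_symm_apply
  show Q z ≤ (1 / (m : ℝ)) * ∑ i, (Qi i (A i) + Ri i (B i))
      + ((ρ - 1) / (ρ * m)) * ∑ i, ⟪gradient (Ri i) (ψ i z), ψ i z⟫
  rw [hgrad]
  calc Q z = (1 / (m:ℝ)) * ∑ i, (Qi i (φ i z) + Ri i (ψ i z)) := hQ z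
    _ ≤ (1 / (m:ℝ)) * ((∑ i, (Qi i (A i) + Ri i (B i))) + (1 - 1/ρ) * G) :=
        mul_le_mul_of_nonneg_left F3 (le_of_lt hminv)
    _ = (1 / (m:ℝ)) * ∑ i, (Qi i (A i) + Ri i (B i)) + ((ρ - 1) / (ρ * m)) * G := by
        field_simp
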